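/- Let G be a weighted undirected graph with positive edge weights, let C be a minimum-weight simple cycle in G, and let s, v_i, v_{i+1} ∈ C with (v_i, v_{i+1}) a critical edge for s (i.e., d_C[s, v_i] ≤ ⌊w(C)/2⌋ and d_C[v_{i+1}, s] ≤ ⌊w(C)/2⌋). Then the portion of C from s to v_i is a shortest path in G, i.e., d[s, v_i] = d_C[s, v_i], and similarly d[v_{i+1}, s] = d_C[v_{i+1}, s]. -/

import Mathlib

/-- `p` is a walk in the graph with edge relation `E`. -/
def IsWalk {V : Type*} (E : V → V → Prop) : List V → Prop
  | [] => True
  | [_] => True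
  | a :: b :: l => E a b ∧ IsWalk E (b :: l)

/-- `p` is a walk from `u` to `x`. -/
def IsWalkFrom {V : Type*} (E : V → V → Prop) (p : List V) (u x : V) : Prop :=
  IsWalk E p ∧ p.head? = some u ∧ p.getLast? = some x

/-- Total weight of a walk given as a list of vertices. -/
def wWeight {V α : Type*} [AddCommMonoid α] (w : V → V → α) : List V → α
  | a :: b :: l => w a b + wWeight w (b :: l)
  | _ => 0

/-- Weight of the arc of a cycle (an `ℓ`-periodic vertex sequence) from position `a`
traversing `k` edges. -/
def arcW {V α : Type*} [AddCommMonoid α] (w : V → V → α) (c : ℕ → V) (a k : ℕ) : α :=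
  ∑ j ∈ Finset.range k, w (c (a + j)) (c (a + j + 1))

/-- Auxiliary: list of vertices of the arc of a cycle from `a` traversing `k` edges. -/
def arcList {V : Type*} (f : ℕ → V) (a : ℕ) : ℕ → List V
  | 0 => [f a]
  | k+1 => f a :: arcList f (a+1) k

section myHelpers
variable {V : Type*} {E : V → V → Prop} {w : V → V → ℝ}

@[simp] lemma wWeight_nil : wWeight w ([] : List V) = 0 := rfl
@[simp] lemma wWeight_single (a : V) : wWeight w [a] = 0 := rfl

lemma wWeight_cons (a b : V) (l : List V) :
    wWeight w (a :: b :: l) = w a b + wWeight w (b :: l) := rfl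

lemma wWeight_split : ∀ (l1 : List V) (z : V) (l2 : List V),
    wWeight w (l1 ++ z :: l2) = wWeight w (l1 ++ [z]) + wWeight w (z :: l2)
  | [], z, l2 => by simp [wWeight]
  | [a], z, l2 => by simp [wWeight_cons]
  | a :: b :: t, z, l2 => by
    have := wWeight_split (b :: t) z l2
    simp only [List.cons_append, wWeight_cons] at *
    rw [this]; ring

lemma isWalk_split : ∀ (l1 : List V) (z : V) (l2 : List V),
    IsWalk E (l1 ++ z :: l2) → IsWalk E (l1 ++ [z]) ∧ IsWalk E (z :: l2)
  | [], z, l2, h => ⟨trivial, h⟩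
  | [a], z, l2, h => ⟨⟨h.1, trivial⟩, h.2⟩
  | a :: b :: t, z, l2, h => by
    have ih := isWalk_split (b :: t) z l2 h.2
    exact ⟨⟨h.1, ih.1⟩, ih.2⟩

lemma isWalk_join : ∀ (l1 : List V) (z : V) (l2 : List V),
    IsWalk E (l1 ++ [z]) → IsWalk E (z :: l2) → IsWalk E (l1 ++ z :: l2)
  | [], z, l2, _, h2 => h2
  | [a], z, l2, h1, h2 => ⟨h1.1, h2⟩
  | a :: b :: t, z, l2, h1, h2 => ⟨h1.1, isWalk_join (b :: t) z l2 h1.2 h2⟩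

lemma wWeight_nonneg (hwpos : ∀ a b, E a b → 0 < w a b) :
    ∀ {p : List V}, IsWalk E p → 0 ≤ wWeight w p
  | [], _ => le_refl _
  | [_], _ => le_refl _
  | a :: b :: l, h => by
    rw [wWeight_cons]
    have h1 := wWeight_nonneg hwpos (p := b :: l) h.2
    have h2 := (hwpos a b h.1).le
    linarith

lemma exists_dup_decomp : ∀ {p : List V}, ¬ p.Nodup →
    ∃ (a : V) (l1 l2 l3 : List V), p = l1 ++ a :: (l2 ++ a :: l3)
  | [], h => absurd List.nodup_nil h
  | x :: t, h => by
    by_cases hx : x ∈ t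
    · obtain ⟨l2, l3, rfl⟩ := List.append_of_mem hx
      exact ⟨x, [], l2, l3, rfl⟩
    · have ht : ¬ t.Nodup := fun hn => h (List.nodup_cons.2 ⟨hx, hn⟩)
      obtain ⟨a, l1, l2, l3, rfl⟩ := exists_dup_decomp ht
      exact ⟨a, x :: l1, l2, l3, rfl⟩

lemma walk_dedup (hwpos : ∀ a b, E a b → 0 < w a b) :
    ∀ (n : ℕ) (p : List V) (u x : V), p.length ≤ n → IsWalkFrom E p u x →
    ∃ q, IsWalkFrom E q u x ∧ q.Nodup ∧ wWeight w q ≤ wWeight w p := by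
  intro n
  induction n with
  | zero =>
    intro p u x hl h
    have : p = [] := List.eq_nil_of_length_eq_zero (by omega)
    subst this
    exact absurd h.2.1 (by simp)
  | succ n ih =>
    intro p u x hl h
    by_cases hnd : p.Nodup
    · exact ⟨p, h, hnd, le_refl _⟩
    · obtain ⟨a, l1, l2, l3, rfl⟩ := exists_dup_decomp hnd
      obtain ⟨hw, hh, hlast⟩ := h
      have hs1 := isWalk_split l1 a (l2 ++ a :: l3) hw
      have hs2 := isWalk_split (a :: l2) a l3 (by simpa using hs1.2)
      have hq : IsWalkFrom E (l1 ++ a :: l3) u x := by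
        refine ⟨isWalk_join l1 a l3 hs1.1 hs2.2, ?_, ?_⟩
        · cases l1 <;> simp_all
        · have h3 : a :: (l2 ++ a :: l3) = (a :: l2) ++ (a :: l3) := by simp
          rw [h3, ← List.append_assoc] at hlast
          rw [List.getLast?_append] at hlast ⊢
          rw [List.getLast?_eq_getLast (l := a :: l3) (by simp)] at hlast ⊢
          simpa using hlast
      have hlen : (l1 ++ a :: l3).length ≤ n := by
        simp at hl ⊢; omega
      obtain ⟨q, hq1, hq2, hq3⟩ := ih (l1 ++ a :: l3) u x hlen hq
      refine ⟨q, hq1, hq2, le_trans hq3 ?_⟩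
      have e1 := wWeight_split (w := w) l1 a (l2 ++ a :: l3)
      have e2 := wWeight_split (w := w) (a :: l2) a l3
      have e3 := wWeight_split (w := w) l1 a l3
      simp only [List.cons_append] at e2
      have hmid : 0 ≤ wWeight w ((a :: l2) ++ [a]) := wWeight_nonneg hwpos hs2.1
      simp only [List.cons_append] at hmid
      rw [e1, e2, e3]
      linarith

lemma isWalk_concat : ∀ {l : List V} {b z : V}, IsWalk E l → l.getLast? = some b →
    E b z → IsWalk E (l ++ [z])
  | [], b, z, _, hb, _ => by simp at hb
  | [a], b, z, _, hb, he => by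
    simp at hb; subst hb; exact ⟨he, trivial⟩
  | a :: c :: l, b, z, hw, hb, he => by
    refine ⟨hw.1, isWalk_concat hw.2 ?_ he⟩
    simpa [List.getLast?_cons_cons] using hb

lemma wWeight_concat : ∀ {l : List V} {b : V} (z : V), l.getLast? = some b →
    wWeight w (l ++ [z]) = wWeight w l + w b z
  | [], b, z, hb => by simp at hb
  | [a], b, z, hb => by simp at hb; subst hb; simp [wWeight_cons]
  | a :: c :: l, b, z, hb => by
    have := wWeight_concat (l := c :: l) (b := b) z (by simpa using hb)
    simp only [List.cons_append, wWeight_cons] at *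
    rw [this]; ring

lemma isWalk_getElem : ∀ {p : List V}, IsWalk E p → ∀ i (h : i + 1 < p.length),
    E p[i] p[i+1]
  | a :: b :: l, hw, 0, h => hw.1
  | a :: b :: l, hw, (i+1), h => by
    exact isWalk_getElem (p := b :: l) hw.2 i (by simpa using h)
  | [], _, i, h => by simp at h
  | [a], _, i, h => by simp at h

lemma wWeight_eq_sum (z : V) : ∀ (p : List V),
    wWeight w p = ∑ j ∈ Finset.range (p.length - 1),
      w (p.getD j z) (p.getD (j+1) z)
  | [] => by simp
  | [a] => by simp
  | a :: b :: l => by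
    rw [wWeight_cons, wWeight_eq_sum z (b :: l)]
    have hlen : (a :: b :: l).length - 1 = ((b :: l).length - 1) + 1 := by simp
    rw [hlen, Finset.sum_range_succ']
    have h0 : w ((a :: b :: l).getD 0 z) ((a :: b :: l).getD 1 z) = w a b := by
      simp [List.getD]
    rw [h0]
    have hs : ∀ j, w ((a :: b :: l).getD (j+1) z) ((a :: b :: l).getD (j+1+1) z)
        = w ((b :: l).getD j z) ((b :: l).getD (j+1) z) := fun j => by
      simp [List.getD_cons_succ]
    simp only [hs]
    ring

lemma isWalk_getD (z : V) {p : List V} (hw : IsWalk E p) {i : ℕ} (h : i + 1 < p.length) :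
    E (p.getD i z) (p.getD (i+1) z) := by
  rw [List.getD_eq_getElem _ _ (by omega), List.getD_eq_getElem _ _ h]
  exact isWalk_getElem hw i h

lemma nodup_getD_inj (z : V) {l : List V} (h : l.Nodup) {i j : ℕ}
    (hi : i < l.length) (hj : j < l.length) (hij : l.getD i z = l.getD j z) : i = j := by
  rw [List.getD_eq_getElem _ _ hi, List.getD_eq_getElem _ _ hj] at hij
  exact h.getElem_inj_iff.1 hij

lemma cycle_of_list {c : List V} {n : ℕ} (hn : 3 ≤ n) (hlen : c.length = n + 1)
    (hw : IsWalk E c) (z : V)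
    (hfl : c.getD n z = c.getD 0 z)
    (hnd : (c.take n).Nodup) :
    ∃ u : ℕ → V, (∀ j, u (j+n) = u j) ∧ (∀ j, E (u j) (u (j+1))) ∧
      (∀ i j, i < n → j < n → u i = u j → i = j) ∧
      arcW w u 0 n = wWeight w c := by
  refine ⟨fun j => c.getD (j % n) z, fun j => by simp [Nat.add_mod_right], ?_, ?_, ?_⟩
  · intro j
    show E (c.getD (j % n) z) (c.getD ((j + 1) % n) z)
    have hilt : j % n < n := Nat.mod_lt _ (by omega)
    by_cases h : j % n + 1 = n
    · have hj1 : (j + 1) % n = 0 := by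
        rw [Nat.add_mod, Nat.mod_eq_of_lt (show 1 < n by omega), h, Nat.mod_self]
      have hE := isWalk_getD (E := E) z hw (i := j % n) (by omega)
      rw [h, hfl] at hE
      rw [hj1]
      exact hE
    · have hj1 : (j + 1) % n = j % n + 1 := by
        rw [Nat.add_mod, Nat.mod_eq_of_lt (show 1 < n by omega),
          Nat.mod_eq_of_lt (by omega)]
      rw [hj1]
      exact isWalk_getD z hw (by omega)
  · intro i j hi hj hij
    simp only [Nat.mod_eq_of_lt hi, Nat.mod_eq_of_lt hj] at hij
    have ei : c.getD i z = (c.take n).getD i z := by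
      rw [List.getD_eq_getElem _ _ (by omega), List.getD_eq_getElem _ _ (by simp; omega),
        List.getElem_take]
    have ej : c.getD j z = (c.take n).getD j z := by
      rw [List.getD_eq_getElem _ _ (by omega), List.getD_eq_getElem _ _ (by simp; omega),
        List.getElem_take]
    rw [ei, ej] at hij
    exact nodup_getD_inj z hnd (by simp; omega) (by simp; omega) hij
  · rw [wWeight_eq_sum z c, hlen]
    simp only [Nat.add_sub_cancel, arcW, Nat.zero_add]
    apply Finset.sum_congr rfl
    intro j hj
    simp only [Finset.mem_range] at hj
    rw [Nat.mod_eq_of_lt hj]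
    by_cases h : j + 1 = n
    · have hj1 : (j + 1) % n = 0 := by rw [h, Nat.mod_self]
      rw [hj1, ← hfl, ← h]
    · rw [Nat.mod_eq_of_lt (by omega)]

lemma arcList_head (f : ℕ → V) : ∀ (k a : ℕ), (arcList f a k).head? = some (f a)
  | 0, _ => rfl
  | _+1, _ => rfl

lemma arcW_succ (f : ℕ → V) (a k : ℕ) :
    arcW w f a (k+1) = w (f a) (f (a+1)) + arcW w f (a+1) k := by
  unfold arcW
  rw [Finset.sum_range_succ']
  simp only [Nat.add_zero]
  rw [add_comm]
  congr 1
  apply Finset.sum_congr rfl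
  intro j _
  congr 2 <;> omega

lemma arcW_split (f : ℕ → V) (a k1 k2 : ℕ) :
    arcW w f a (k1 + k2) = arcW w f a k1 + arcW w f (a + k1) k2 := by
  induction k2 with
  | zero => simp [arcW]
  | succ k2 ih =>
    have e1 : k1 + (k2 + 1) = (k1 + k2) + 1 := by omega
    rw [e1]
    unfold arcW
    rw [Finset.sum_range_succ, Finset.sum_range_succ]
    unfold arcW at ih
    rw [ih]
    have e2 : a + (k1 + k2) = a + k1 + k2 := by omega
    rw [e2]
    ring

lemma arcList_walkFrom (hedge : ∀ j, E (f j) (f (j+1))) :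
    ∀ (k a : ℕ), IsWalkFrom E (arcList f a k) (f a) (f (a+k))
  | 0, a => ⟨trivial, by simp [arcList], by simp [arcList]⟩
  | (k+1), a => by
    obtain ⟨hw, hh, hl⟩ := arcList_walkFrom hedge k (a+1)
    refine ⟨?_, ?_, ?_⟩
    · show IsWalk E (f a :: arcList f (a+1) k)
      cases hignore : arcList f (a+1) k with
      | nil => trivial
      | cons c t =>
        have hc : c = f (a+1) := by
          have := arcList_head f k (a+1)
          rw [hignore] at this
          simpa using this
        rw [hignore] at hw
        exact ⟨hc ▸ hedge a, hw⟩
    · show (f a :: arcList f (a+1) k).head? = some (f a)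
      simp
    · show (f a :: arcList f (a+1) k).getLast? = some (f (a + (k+1)))
      cases hignore : arcList f (a+1) k with
      | nil => simp [hignore] at hl
      | cons c t =>
        rw [hignore] at hl
        rw [List.getLast?_cons_cons, show a + (k+1) = a+1+k from by omega]
        exact hl

lemma arcList_weight : ∀ (k a : ℕ), wWeight w (arcList f a k) = arcW w f a k
  | 0, a => by simp [arcList, arcW]
  | (k+1), a => by
    rw [arcW_succ]
    show wWeight w (f a :: arcList f (a+1) k) = _
    rw [← arcList_weight k (a+1)]
    cases hignore : arcList f (a+1) k with
    | nil => exact absurd hignore (by cases k <;> simp [arcList])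
    | cons c t =>
      have hc : c = f (a+1) := by
        have := arcList_head f k (a+1)
        rw [hignore] at this
        simpa using this
      rw [wWeight_cons, hc]

lemma mem_arcList : ∀ (k a : ℕ) (x : V), x ∈ arcList f a k →
    ∃ j, a ≤ j ∧ j ≤ a + k ∧ x = f j
  | 0, a, x, hx => ⟨a, le_refl _, by omega, by simpa [arcList] using hx⟩
  | (k+1), a, x, hx => by
    rcases (List.mem_cons.1 hx) with h | h
    · exact ⟨a, le_refl _, by omega, h⟩
    · obtain ⟨j, h1, h2, h3⟩ := mem_arcList k (a+1) x h
      exact ⟨j, by omega, by omega, h3⟩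

lemma arcList_nodup : ∀ (k a : ℕ),
    (∀ i j, a ≤ i → i ≤ a + k → a ≤ j → j ≤ a + k → f i = f j → i = j) →
    (arcList f a k).Nodup
  | 0, a, _ => by simp [arcList]
  | (k+1), a, hf => by
    show (f a :: arcList f (a+1) k).Nodup
    rw [List.nodup_cons]
    constructor
    · intro hmem
      obtain ⟨j, h1, h2, h3⟩ := mem_arcList k (a+1) (f a) hmem
      have := hf j a (by omega) (by omega) (by omega) (by omega) h3.symm
      omega
    · exact arcList_nodup k (a+1) (fun i j h1 h2 h3 h4 he =>
        hf i j (by omega) (by omega) (by omega) (by omega) he)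

lemma wWeight_reverse (hwsym : ∀ a b : V, w a b = w b a) :
    ∀ l : List V, wWeight w l.reverse = wWeight w l
  | [] => rfl
  | [a] => rfl
  | a :: b :: t => by
    have ih := wWeight_reverse hwsym (b :: t)
    rw [wWeight_cons, ← ih]
    rw [List.reverse_cons]
    rw [wWeight_concat (w := w) (b := b) a (by simp)]
    rw [hwsym b a, add_comm]

lemma v_mod {ℓ : ℕ} {v : ℕ → V} (hl : 0 < ℓ) (hper : ∀ j, v (j + ℓ) = v j) :
    ∀ j, v j = v (j % ℓ) := by
  intro j
  induction j using Nat.strong_induction_on with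
  | _ j ih =>
    rcases Nat.lt_or_ge j ℓ with h | h
    · rw [Nat.mod_eq_of_lt h]
    · have e : j = (j - ℓ) + ℓ := by omega
      have e2 : j % ℓ = (j - ℓ) % ℓ := by conv_lhs => rw [e, Nat.add_mod_right]
      calc v j = v ((j - ℓ) + ℓ) := by rw [← e]
        _ = v (j - ℓ) := hper _
        _ = v ((j - ℓ) % ℓ) := ih _ (by omega)
        _ = v (j % ℓ) := by rw [← e2]

lemma arcW_shift {ℓ : ℕ} {v : ℕ → V} (hper : ∀ j, v (j + ℓ) = v j) :
    ∀ a, arcW w v a ℓ = arcW w v 0 ℓ := by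
  intro a
  induction a with
  | zero => rfl
  | succ a ih =>
    rw [← ih]
    have h1 : arcW w v a ℓ + w (v (a + ℓ)) (v (a + ℓ + 1)) = arcW w v a (ℓ + 1) := by
      unfold arcW
      rw [Finset.sum_range_succ]
    have h2 : arcW w v a (ℓ + 1) = w (v a) (v (a + 1)) + arcW w v (a + 1) ℓ := by
      unfold arcW
      rw [Finset.sum_range_succ']
      rw [add_comm]
      congr 1
      apply Finset.sum_congr rfl
      intro j _
      congr 2 <;> omega
    have h3 : v (a + ℓ) = v a := hper a
    have h4 : v (a + ℓ + 1) = v (a + 1) := by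
      rw [show a + ℓ + 1 = (a + 1) + ℓ from by omega]
      exact hper (a + 1)
    rw [h3, h4] at h1
    have := h1.trans h2
    linarith

lemma cyc (hwpos : ∀ a b, E a b → 0 < w a b) :
    ∀ (n : ℕ) (Q P : List V) (x y : V), Q.length ≤ n → x ≠ y →
    IsWalkFrom E P x y → P.Nodup → IsWalkFrom E Q y x → Q.Nodup →
    P ≠ Q.reverse →
    ∃ (m : ℕ) (u : ℕ → V), 3 ≤ m ∧ (∀ j, u (j+m) = u j) ∧ (∀ j, E (u j) (u (j+1))) ∧
      (∀ i j, i < m → j < m → u i = u j → i = j) ∧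
      arcW w u 0 m ≤ wWeight w P + wWeight w Q := by
  intro n
  induction n with
  | zero =>
    intro Q P x y hl _ _ _ hQ _ _
    have : Q = [] := List.eq_nil_of_length_eq_zero (by omega)
    subst this
    exact absurd hQ.2.1 (by simp)
  | succ n ih =>
    rintro Q P x y hl hxy hP hPnd hQ hQnd hinv
    obtain ⟨hQw, hQh, hQl⟩ := hQ
    obtain ⟨hPw, hPh, hPl⟩ := hP
    obtain ⟨Qt, rfl⟩ : ∃ Qt, Q = y :: Qt := by
      cases Q with
      | nil => simp at hQh
      | cons h t =>
        refine ⟨t, ?_⟩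
        simp only [List.head?_cons, Option.some.injEq] at hQh
        rw [hQh]
    obtain ⟨q1, Q', rfl⟩ : ∃ q1 Q', Qt = q1 :: Q' := by
      cases Qt
      · exact absurd (show x = y by simpa using hQl.symm) hxy
      · exact ⟨_, _, rfl⟩
    have hEyq1 : E y q1 := hQw.1
    have hQl' : (q1 :: Q').getLast? = some x := by
      simpa [List.getLast?_cons_cons] using hQl
    have hQ'nd : (q1 :: Q').Nodup := (List.nodup_cons.1 hQnd).2
    have hyQt : y ∉ q1 :: Q' := (List.nodup_cons.1 hQnd).1
    have hwyq1 : 0 < w y q1 := hwpos _ _ hEyq1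
    have hQ'w : IsWalk E (q1 :: Q') := hQw.2
    have hQ'nn : 0 ≤ wWeight w (q1 :: Q') := wWeight_nonneg hwpos hQ'w
    by_cases hq1P : q1 ∈ P
    · obtain ⟨P1, P2, rfl⟩ := List.append_of_mem hq1P
      have hsplit := isWalk_split (E := E) P1 q1 P2 hPw
      have hPl2 : (q1 :: P2).getLast? = some y := by
        rw [List.getLast?_append] at hPl
        obtain ⟨g, hg⟩ : ∃ g, (q1 :: P2).getLast? = some g :=
          ⟨_, List.getLast?_eq_getLast (by simp)⟩
        rw [hg] at hPl ⊢
        simpa using hPl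
      have hq1y : q1 ≠ y := fun h => hyQt (by rw [← h]; exact List.mem_cons_self)
      have hq1P1 : q1 ∉ P1 := fun hmem =>
        (List.disjoint_of_nodup_append hPnd) hmem (List.mem_cons_self)
      match P2, hPl2, hsplit with
      | [], hPl2, _ => exact absurd (by simpa using hPl2) hq1y
      | [b], hPl2, hsplit =>
        have hb : b = y := by simpa using hPl2
        have hxq1 : x ≠ q1 := by
          intro hx
          have hP1nil : P1 = [] := by
            cases P1 with
            | nil => rfl
            | cons c t =>
              have hc : c = x := by simpa using hPh
              exact absurd (show q1 ∈ c :: t by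
                rw [hc, hx]; exact List.mem_cons_self) hq1P1
          subst hP1nil
          have hQ'nil : Q' = [] := by
            cases Q' with
            | nil => rfl
            | cons c t =>
              have hg : (c :: t).getLast? = some x := by
                simpa [List.getLast?_cons_cons] using hQl'
              have hx2 : x ∈ c :: t := List.mem_of_getLast? hg
              rw [hx] at hx2
              exact absurd hx2 (List.nodup_cons.1 hQ'nd).1
          subst hQ'nil
          apply hinv
          simp [hb, ← hx]
        have hP''h : (P1 ++ [q1]).head? = some x := by
          cases P1 with
          | nil => exact absurd (show x = q1 by simpa using hPh.symm) hxq1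
          | cons c t => simpa using hPh
        have hP''nd : (P1 ++ [q1]).Nodup :=
          List.Nodup.sublist (List.Sublist.append_left ((List.nil_sublist [b]).cons₂ q1) P1) hPnd
        have hinv'' : P1 ++ [q1] ≠ (q1 :: Q').reverse := by
          intro he
          apply hinv
          have hP1 : P1 = Q'.reverse := by
            apply List.append_cancel_right (bs := [q1])
            simpa using he
          simp [hP1, hb]
        obtain ⟨m, u, h3, hperu, hedgeu, hinju, hbound⟩ :=
          ih (q1 :: Q') (P1 ++ [q1]) x q1 (by simp at hl ⊢; omega) hxq1
            ⟨hsplit.1, hP''h, List.getLast?_concat⟩ hP''nd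
            ⟨hQ'w, rfl, hQl'⟩ hQ'nd hinv''
        refine ⟨m, u, h3, hperu, hedgeu, hinju, le_trans hbound ?_⟩
        have e1 := wWeight_split (w := w) P1 q1 [b]
        have hwq1b : 0 < w q1 b := hwpos _ _ hsplit.2.1
        have e2 : wWeight w (q1 :: [b]) = w q1 b := by simp [wWeight_cons]
        rw [e1, e2, wWeight_cons y q1 Q']
        linarith
      | b :: b' :: P2', hPl2, hsplit =>
        have hRnd : (q1 :: b :: b' :: P2').Nodup :=
          List.Nodup.sublist (List.sublist_append_right P1 _) hPnd
        have hCw : IsWalk E ((q1 :: b :: b' :: P2') ++ [q1]) :=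
          isWalk_concat (E := E) hsplit.2 hPl2 hEyq1
        have hlenR : (q1 :: b :: b' :: P2').length = P2'.length + 3 := by simp
        have hfl : ((q1 :: b :: b' :: P2') ++ [q1]).getD (P2'.length + 3) q1
            = ((q1 :: b :: b' :: P2') ++ [q1]).getD 0 q1 := by
          have h0 : ((q1 :: b :: b' :: P2') ++ [q1]).getD 0 q1 = q1 := by simp
          have hn : ((q1 :: b :: b' :: P2') ++ [q1]).getD (P2'.length + 3) q1 = q1 := by
            rw [List.getD_eq_getElem _ _ (by simp)]
            simp
          rw [h0, hn]
        have htk : (((q1 :: b :: b' :: P2') ++ [q1]).take (P2'.length + 3)).Nodup := by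
          rw [List.take_left' (by simp)]
          exact hRnd
        obtain ⟨u, hperu, hedgeu, hinju, harc⟩ :=
          cycle_of_list (E := E) (w := w) (n := P2'.length + 3) (by omega)
            (by simp) hCw q1 hfl htk
        have hweq : wWeight w ((q1 :: b :: b' :: P2') ++ [q1])
            = wWeight w (q1 :: b :: b' :: P2') + w y q1 :=
          wWeight_concat (w := w) q1 hPl2
        have e1 := wWeight_split (w := w) P1 q1 (b :: b' :: P2')
        have hnn1 : 0 ≤ wWeight w (P1 ++ [q1]) := wWeight_nonneg hwpos hsplit.1
        refine ⟨P2'.length + 3, u, by omega, ?_, hedgeu, ?_, ?_⟩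
        · intro j; have := hperu j; simpa [hlenR] using this
        · intro i j hi hj hij
          exact hinju i j (by omega) (by omega) hij
        · have harc' : arcW w u 0 (P2'.length + 3)
              = wWeight w ((q1 :: b :: b' :: P2') ++ [q1]) := by
            simpa [hlenR] using harc
          rw [harc', hweq, e1, wWeight_cons y q1 Q']
          linarith
    · have hxP : x ∈ P := by
        cases P with
        | nil => simp at hPh
        | cons c t =>
          have hc : c = x := by simpa using hPh
          rw [← hc]; exact List.mem_cons_self
      have hxq1 : x ≠ q1 := fun h => hq1P (h ▸ hxP)
      have hP''w : IsWalk E (P ++ [q1]) := isWalk_concat (E := E) hPw hPl hEyq1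
      have hP''h : (P ++ [q1]).head? = some x := by
        rw [List.head?_append, hPh]; rfl
      have hP''nd : (P ++ [q1]).Nodup := by
        rw [List.nodup_append]
        refine ⟨hPnd, List.nodup_singleton _, ?_⟩
        intro a ha b hb hab
        simp only [List.mem_singleton] at hb
        subst hb
        exact hq1P (hab ▸ ha)
      have hinv'' : P ++ [q1] ≠ (q1 :: Q').reverse := by
        intro he
        have hPQ : P = Q'.reverse := by
          apply List.append_cancel_right (bs := [q1])
          simpa using he
        rw [hPQ, List.getLast?_reverse] at hPl
        have hyQ' : y ∈ Q' := by
          cases Q' with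
          | nil => simp at hPl
          | cons c t =>
            have hc : c = y := by simpa using hPl
            rw [← hc]; exact List.mem_cons_self
        exact hyQt (List.mem_cons_of_mem _ hyQ')
      obtain ⟨m, u, h3, hperu, hedgeu, hinju, hbound⟩ :=
        ih (q1 :: Q') (P ++ [q1]) x q1 (by simp at hl ⊢; omega) hxq1
          ⟨hP''w, hP''h, List.getLast?_concat⟩ hP''nd
          ⟨hQ'w, rfl, hQl'⟩ hQ'nd hinv''
      refine ⟨m, u, h3, hperu, hedgeu, hinju, le_trans hbound ?_⟩
      rw [wWeight_concat (w := w) q1 hPl, wWeight_cons y q1 Q']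
      linarith

end myHelpers

/-- in an undirected graph with positive real edge weights, if `C`
(encoded by the `ℓ`-periodic sequence `v`, injective on one period) is a minimum-weight
simple cycle, `s = v a` and `(v (a+k), v (a+k+1))` is a critical edge for `s`
(both cycle-arcs to/from the critical edge have weight at most `w(C)/2`), then the two
cycle portions are shortest paths: `d[s, v_{a+k}] = d_C[s, v_{a+k}]` and
`d[v_{a+k+1}, s] = d_C[v_{a+k+1}, s]`.  Here `d` is the shortest-path distance,
characterized by being a lower bound on the weight of every walk and attained by some
walk whenever the two vertices are connected. -/
theorem stmt2 {V : Type*} (E : V → V → Prop) (w : V → V → ℝ) (d : V → V → ℝ)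
    (hEsym : ∀ a b, E a b → E b a) (hwsym : ∀ a b, w a b = w b a)
    (hwpos : ∀ a b, E a b → 0 < w a b)
    (hdle : ∀ u x p, IsWalkFrom E p u x → d u x ≤ wWeight w p)
    (hdach : ∀ u x, (∃ p, IsWalkFrom E p u x) →
      ∃ p, IsWalkFrom E p u x ∧ wWeight w p = d u x)
    (ℓ : ℕ) (v : ℕ → V) (hℓ : 3 ≤ ℓ)
    (hper : ∀ j, v (j + ℓ) = v j)
    (hedge : ∀ j, E (v j) (v (j + 1)))
    (hinj : ∀ i j, i < ℓ → j < ℓ → v i = v j → i = j)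
    (hmin : ∀ (m : ℕ) (u : ℕ → V), 3 ≤ m → (∀ j, u (j + m) = u j) →
      (∀ j, E (u j) (u (j + 1))) → (∀ i j, i < m → j < m → u i = u j → i = j) →
      arcW w v 0 ℓ ≤ arcW w u 0 m)
    (a k : ℕ) (hk : k < ℓ)
    (h1 : arcW w v a k ≤ arcW w v 0 ℓ / 2)
    (h2 : arcW w v (a + k + 1) (ℓ - (k + 1)) ≤ arcW w v 0 ℓ / 2) :
    d (v a) (v (a + k)) = arcW w v a k ∧
    d (v (a + k + 1)) (v a) = arcW w v (a + k + 1) (ℓ - (k + 1)) := by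
  have hl0 : 0 < ℓ := by omega
  have hinj' : ∀ i j : ℕ, i ≤ j → j - i < ℓ → v i = v j → i = j := by
    intro i j hij hlt he
    have hm : i % ℓ = j % ℓ := by
      apply hinj _ _ (Nat.mod_lt _ hl0) (Nat.mod_lt _ hl0)
      rw [← v_mod hl0 hper, ← v_mod hl0 hper]
      exact he
    have hdvd : ℓ ∣ j - i := (Nat.modEq_iff_dvd' hij).1 hm
    rcases Nat.eq_zero_or_pos (j - i) with h0 | hpos
    · omega
    · exact absurd (Nat.le_of_dvd hpos hdvd) (by omega)
  have hsplitk : arcW w v a k + arcW w v (a + k) (ℓ - k) = arcW w v 0 ℓ := by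
    rw [← arcW_split, show k + (ℓ - k) = ℓ from by omega, arcW_shift hper]
  have hsplitk1 : arcW w v a (k + 1) + arcW w v (a + k + 1) (ℓ - (k + 1))
      = arcW w v 0 ℓ := by
    rw [show a + k + 1 = a + (k + 1) from by omega, ← arcW_split,
      show (k + 1) + (ℓ - (k + 1)) = ℓ from by omega, arcW_shift hper]
  -- Part 1
  have harc1 := arcList_walkFrom (E := E) hedge k a
  have hle1 : d (v a) (v (a + k)) ≤ arcW w v a k := by
    rw [← arcList_weight]
    exact hdle _ _ _ harc1
  have hd1 : 0 ≤ d (v a) (v (a + k)) := by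
    obtain ⟨p, hp, hwp⟩ := hdach _ _ ⟨_, harc1⟩
    rw [← hwp]
    exact wWeight_nonneg hwpos hp.1
  have key1 : d (v a) (v (a + k)) = arcW w v a k := by
    refine le_antisymm hle1 ?_
    by_contra hlt
    push_neg at hlt
    have hk1 : 1 ≤ k := by
      rcases Nat.eq_zero_or_pos k with rfl | h
      · have h0 : arcW w v a 0 = 0 := by simp [arcW]
        rw [h0] at hlt
        linarith
      · omega
    have hne : v a ≠ v (a + k) := by
      intro he
      have := hinj' a (a + k) (by omega) (by omega) he
      omega
    obtain ⟨p, hp, hwp⟩ := hdach _ _ ⟨_, harc1⟩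
    obtain ⟨P, hPfrom, hPnd, hPle⟩ := walk_dedup hwpos p.length p _ _ le_rfl hp
    have hPwt : wWeight w P ≤ d (v a) (v (a + k)) := hwp ▸ hPle
    have hQfrom0 := arcList_walkFrom (E := E) hedge (ℓ - k) (a + k)
    have hQend : v (a + k + (ℓ - k)) = v a := by
      rw [show a + k + (ℓ - k) = a + ℓ from by omega]
      exact hper a
    rw [hQend] at hQfrom0
    have hQnd : (arcList v (a + k) (ℓ - k)).Nodup := by
      apply arcList_nodup
      intro i j hi1 hi2 hj1 hj2 he
      rcases le_total i j with hij | hij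
      · exact hinj' i j hij (by omega) he
      · exact (hinj' j i hij (by omega) he.symm).symm
    have hQwt : wWeight w (arcList v (a + k) (ℓ - k)) = arcW w v (a + k) (ℓ - k) :=
      arcList_weight _ _
    have hinvne : P ≠ (arcList v (a + k) (ℓ - k)).reverse := by
      intro he
      have hPQ : wWeight w P = arcW w v (a + k) (ℓ - k) := by
        rw [he, wWeight_reverse hwsym, hQwt]
      linarith
    obtain ⟨m, u, h3m, hperu, hedgeu, hinju, hb⟩ :=
      cyc hwpos (arcList v (a + k) (ℓ - k)).length (arcList v (a + k) (ℓ - k)) P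
        (v a) (v (a + k)) le_rfl hne hPfrom hPnd hQfrom0 hQnd hinvne
    have hmin' := hmin m u h3m hperu hedgeu hinju
    rw [hQwt] at hb
    linarith
  -- Part 2
  have harc2 := arcList_walkFrom (E := E) hedge (ℓ - (k + 1)) (a + k + 1)
  have hQend2 : v (a + k + 1 + (ℓ - (k + 1))) = v a := by
    rw [show a + k + 1 + (ℓ - (k + 1)) = a + ℓ from by omega]
    exact hper a
  rw [hQend2] at harc2
  have hle2 : d (v (a + k + 1)) (v a) ≤ arcW w v (a + k + 1) (ℓ - (k + 1)) := by
    rw [← arcList_weight]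
    exact hdle _ _ _ harc2
  have hd2 : 0 ≤ d (v (a + k + 1)) (v a) := by
    obtain ⟨p, hp, hwp⟩ := hdach _ _ ⟨_, harc2⟩
    rw [← hwp]
    exact wWeight_nonneg hwpos hp.1
  have key2 : d (v (a + k + 1)) (v a) = arcW w v (a + k + 1) (ℓ - (k + 1)) := by
    refine le_antisymm hle2 ?_
    by_contra hlt
    push_neg at hlt
    have hk2 : k + 2 ≤ ℓ := by
      rcases Nat.lt_or_ge (k + 1) ℓ with h | h
      · omega
      · have h0 : ℓ - (k + 1) = 0 := by omega
        rw [h0] at hlt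
        have h00 : arcW w v (a + k + 1) 0 = 0 := by simp [arcW]
        rw [h00] at hlt
        linarith
    have hne : v (a + k + 1) ≠ v a := by
      intro he
      have := hinj' a (a + k + 1) (by omega) (by omega) he.symm
      omega
    obtain ⟨p, hp, hwp⟩ := hdach _ _ ⟨_, harc2⟩
    obtain ⟨P, hPfrom, hPnd, hPle⟩ := walk_dedup hwpos p.length p _ _ le_rfl hp
    have hPwt : wWeight w P ≤ d (v (a + k + 1)) (v a) := hwp ▸ hPle
    have hQfrom0 := arcList_walkFrom (E := E) hedge (k + 1) a
    have heq : a + (k + 1) = a + k + 1 := by omega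
    rw [heq] at hQfrom0
    have hQnd : (arcList v a (k + 1)).Nodup := by
      apply arcList_nodup
      intro i j hi1 hi2 hj1 hj2 he
      rcases le_total i j with hij | hij
      · exact hinj' i j hij (by omega) he
      · exact (hinj' j i hij (by omega) he.symm).symm
    have hQwt : wWeight w (arcList v a (k + 1)) = arcW w v a (k + 1) :=
      arcList_weight _ _
    have hinvne : P ≠ (arcList v a (k + 1)).reverse := by
      intro he
      have hPQ : wWeight w P = arcW w v a (k + 1) := by
        rw [he, wWeight_reverse hwsym, hQwt]
      linarith
    obtain ⟨m, u, h3m, hperu, hedgeu, hinju, hb⟩ :=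
      cyc hwpos (arcList v a (k + 1)).length (arcList v a (k + 1)) P
        (v (a + k + 1)) (v a) le_rfl hne hPfrom hPnd hQfrom0 hQnd hinvne
    have hmin' := hmin m u h3m hperu hedgeu hinju
    rw [hQwt] at hb
    linarith
  exact ⟨key1, key2⟩
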